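/- The automorphism phi carries the colon ideal K : I onto the colon ideal K' : I; that is, phi(K : I) = K' : I as ideals of R'. -/

import Mathlib

open MvPolynomial

noncomputable section

/- The polynomial ring `R' = R0[L11, L12, L21, L22, L31, L32, d0, A1, A2, A3, B, e1, e2]`,
with the thirteen indeterminates indexed as
`0 ↦ L11, 1 ↦ L12, 2 ↦ L21, 3 ↦ L22, 4 ↦ L31, 5 ↦ L32, 6 ↦ d0, 7 ↦ A1, 8 ↦ A2,
9 ↦ A3, 10 ↦ B, 11 ↦ e1, 12 ↦ e2`. -/

variable (R0 : Type*) [CommRing R0]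

/-- `d1 = L21*L32 - L22*L31`. -/
def d1 : MvPolynomial (Fin 13) R0 := X 2 * X 5 - X 3 * X 4

/-- `d2 = -(L11*L32 - L12*L31)`. -/
def d2 : MvPolynomial (Fin 13) R0 := -(X 0 * X 5 - X 1 * X 4)

/-- `d3 = L11*L22 - L12*L21`. -/
def d3 : MvPolynomial (Fin 13) R0 := X 0 * X 3 - X 1 * X 2

/-- `n1 = d0*A1 + d1`. -/
def n1 : MvPolynomial (Fin 13) R0 := X 6 * X 7 + d1 R0

/-- `n2 = d0*A2 + d2`. -/
def n2 : MvPolynomial (Fin 13) R0 := X 6 * X 8 + d2 R0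

/-- `n3 = d0*A3 + d3*B`. -/
def n3 : MvPolynomial (Fin 13) R0 := X 6 * X 9 + d3 R0 * X 10

/-- The ideal `I = (d0, d1, d2, d3)R'`. -/
def Iideal : Ideal (MvPolynomial (Fin 13) R0) := Ideal.span {X 6, d1 R0, d2 R0, d3 R0}

/-- The ideal `K = (n1, n2, n3)R'`. -/
def Kideal : Ideal (MvPolynomial (Fin 13) R0) := Ideal.span {n1 R0, n2 R0, n3 R0}

/-- The ideal `K' = (n1 + d3*e1, n2 + d3*e2, n3)R'`. -/
def K'ideal : Ideal (MvPolynomial (Fin 13) R0) :=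
  Ideal.span {n1 R0 + d3 R0 * X 11, n2 R0 + d3 R0 * X 12, n3 R0}

/-- The `R0`-algebra automorphism `φ` of `R'` fixing every variable except
`L31 ↦ L31 - e1*L11 - e2*L21` and `L32 ↦ L32 - e1*L12 - e2*L22`. -/
def phi : MvPolynomial (Fin 13) R0 →ₐ[R0] MvPolynomial (Fin 13) R0 :=
  aeval ![X 0, X 1, X 2, X 3,
          X 4 - X 11 * X 0 - X 12 * X 2,
          X 5 - X 11 * X 1 - X 12 * X 3,
          X 6, X 7, X 8, X 9, X 10, X 11, X 12]

/-! ### Auxiliary definitions and lemmas -/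

/-- The inverse automorphism. -/
def psi : MvPolynomial (Fin 13) R0 →ₐ[R0] MvPolynomial (Fin 13) R0 :=
  aeval ![X 0, X 1, X 2, X 3,
          X 4 + X 11 * X 0 + X 12 * X 2,
          X 5 + X 11 * X 1 + X 12 * X 3,
          X 6, X 7, X 8, X 9, X 10, X 11, X 12]

lemma phi_X4 : phi R0 (X 4) = X 4 - X 11 * X 0 - X 12 * X 2 := by rw [phi, aeval_X]; rfl
lemma phi_X5 : phi R0 (X 5) = X 5 - X 11 * X 1 - X 12 * X 3 := by rw [phi, aeval_X]; rfl
lemma psi_X4 : psi R0 (X 4) = X 4 + X 11 * X 0 + X 12 * X 2 := by rw [psi, aeval_X]; rfl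
lemma psi_X5 : psi R0 (X 5) = X 5 + X 11 * X 1 + X 12 * X 3 := by rw [psi, aeval_X]; rfl

lemma phi_Xfix (i : Fin 13) (h : i ≠ 4) (h' : i ≠ 5) : phi R0 (X i) = X i := by
  fin_cases i <;> first | (exact absurd rfl h) | (exact absurd rfl h') | (rw [phi, aeval_X]; rfl)

lemma psi_Xfix (i : Fin 13) (h : i ≠ 4) (h' : i ≠ 5) : psi R0 (X i) = X i := by
  fin_cases i <;> first | (exact absurd rfl h) | (exact absurd rfl h') | (rw [psi, aeval_X]; rfl)

lemma phi_psi_X (i : Fin 13) : phi R0 (psi R0 (X i)) = X i := by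
  by_cases h4 : i = 4
  · subst h4
    rw [psi_X4]
    simp only [map_add, map_mul, phi_X4, phi_Xfix R0 0 (by decide) (by decide),
      phi_Xfix R0 2 (by decide) (by decide), phi_Xfix R0 11 (by decide) (by decide),
      phi_Xfix R0 12 (by decide) (by decide)]
    ring
  by_cases h5 : i = 5
  · subst h5
    rw [psi_X5]
    simp only [map_add, map_mul, phi_X5, phi_Xfix R0 1 (by decide) (by decide),
      phi_Xfix R0 3 (by decide) (by decide), phi_Xfix R0 11 (by decide) (by decide),
      phi_Xfix R0 12 (by decide) (by decide)]
    ring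
  · rw [psi_Xfix R0 i h4 h5, phi_Xfix R0 i h4 h5]

lemma psi_phi_X (i : Fin 13) : psi R0 (phi R0 (X i)) = X i := by
  by_cases h4 : i = 4
  · subst h4
    rw [phi_X4]
    simp only [map_sub, map_mul, psi_X4, psi_Xfix R0 0 (by decide) (by decide),
      psi_Xfix R0 2 (by decide) (by decide), psi_Xfix R0 11 (by decide) (by decide),
      psi_Xfix R0 12 (by decide) (by decide)]
    ring
  by_cases h5 : i = 5
  · subst h5
    rw [phi_X5]
    simp only [map_sub, map_mul, psi_X5, psi_Xfix R0 1 (by decide) (by decide),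
      psi_Xfix R0 3 (by decide) (by decide), psi_Xfix R0 11 (by decide) (by decide),
      psi_Xfix R0 12 (by decide) (by decide)]
    ring
  · rw [phi_Xfix R0 i h4 h5, psi_Xfix R0 i h4 h5]

/-- `φ` as an algebra automorphism. -/
def phiEquiv : MvPolynomial (Fin 13) R0 ≃ₐ[R0] MvPolynomial (Fin 13) R0 :=
  AlgEquiv.ofAlgHom (phi R0) (psi R0)
    (MvPolynomial.algHom_ext fun i => by
      rw [AlgHom.comp_apply, AlgHom.id_apply]; exact phi_psi_X R0 i)
    (MvPolynomial.algHom_ext fun i => by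
      rw [AlgHom.comp_apply, AlgHom.id_apply]; exact psi_phi_X R0 i)

lemma phi_d1 : phi R0 (d1 R0) = d1 R0 + d3 R0 * X 11 := by
  simp only [d1, d3, map_sub, map_mul, phi_X4, phi_X5,
    phi_Xfix R0 0 (by decide) (by decide), phi_Xfix R0 1 (by decide) (by decide),
    phi_Xfix R0 2 (by decide) (by decide), phi_Xfix R0 3 (by decide) (by decide)]
  ring

lemma phi_d2 : phi R0 (d2 R0) = d2 R0 + d3 R0 * X 12 := by
  simp only [d2, d3, map_neg, map_sub, map_mul, phi_X4, phi_X5,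
    phi_Xfix R0 0 (by decide) (by decide), phi_Xfix R0 1 (by decide) (by decide),
    phi_Xfix R0 2 (by decide) (by decide), phi_Xfix R0 3 (by decide) (by decide)]
  ring

lemma phi_d3 : phi R0 (d3 R0) = d3 R0 := by
  simp only [d3, map_sub, map_mul,
    phi_Xfix R0 0 (by decide) (by decide), phi_Xfix R0 1 (by decide) (by decide),
    phi_Xfix R0 2 (by decide) (by decide), phi_Xfix R0 3 (by decide) (by decide)]

lemma phi_n1 : phi R0 (n1 R0) = n1 R0 + d3 R0 * X 11 := by
  simp only [n1, map_add, map_mul, phi_d1,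
    phi_Xfix R0 6 (by decide) (by decide), phi_Xfix R0 7 (by decide) (by decide)]
  ring

lemma phi_n2 : phi R0 (n2 R0) = n2 R0 + d3 R0 * X 12 := by
  simp only [n2, map_add, map_mul, phi_d2,
    phi_Xfix R0 6 (by decide) (by decide), phi_Xfix R0 8 (by decide) (by decide)]
  ring

lemma phi_n3 : phi R0 (n3 R0) = n3 R0 := by
  simp only [n3, map_add, map_mul, phi_d3,
    phi_Xfix R0 6 (by decide) (by decide), phi_Xfix R0 9 (by decide) (by decide),
    phi_Xfix R0 10 (by decide) (by decide)]

/-- A ring isomorphism carries a colon ideal to the colon ideal of the images. -/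
lemma map_colon_eq {R S : Type*} [CommRing R] [CommRing S] (e : R ≃+* S) (N J : Ideal R) :
    Ideal.map (e : R →+* S) (Submodule.colon N J) =
      Submodule.colon (Ideal.map (e : R →+* S) N) (Ideal.map (e : R →+* S) J) := by
  ext x
  rw [Ideal.map_comap_of_equiv e, Ideal.mem_comap, Submodule.mem_colon, Submodule.mem_colon]
  constructor
  · intro h p hp
    rw [Ideal.map_comap_of_equiv e, SetLike.mem_coe, Ideal.mem_comap] at hp
    rw [Ideal.map_comap_of_equiv e, Ideal.mem_comap]
    have := h _ hp
    simpa [smul_eq_mul, map_mul] using this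
  · intro h p hp
    have := h (e p) (by
      rw [Ideal.map_comap_of_equiv e, SetLike.mem_coe, Ideal.mem_comap]
      simpa using hp)
    rw [Ideal.map_comap_of_equiv e, Ideal.mem_comap] at this
    simpa [smul_eq_mul, map_mul] using this

lemma map_phi_eq (J : Ideal (MvPolynomial (Fin 13) R0)) :
    Ideal.map (phi R0) J =
      Ideal.map (((phiEquiv R0).toRingEquiv :
        MvPolynomial (Fin 13) R0 ≃+* MvPolynomial (Fin 13) R0) :
        MvPolynomial (Fin 13) R0 →+* MvPolynomial (Fin 13) R0) J := rfl

lemma map_phi_K : Ideal.map (phi R0) (Kideal R0) = K'ideal R0 := by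
  rw [Kideal, Ideal.map_span, K'ideal]
  congr 1
  rw [Set.image_insert_eq, Set.image_insert_eq, Set.image_singleton,
    phi_n1, phi_n2, phi_n3]

lemma map_phi_I : Ideal.map (phi R0) (Iideal R0) = Iideal R0 := by
  rw [Iideal, Ideal.map_span, Set.image_insert_eq, Set.image_insert_eq,
    Set.image_insert_eq, Set.image_singleton,
    phi_Xfix R0 6 (by decide) (by decide), phi_d1, phi_d2, phi_d3]
  apply le_antisymm
  · rw [Ideal.span_le]
    rintro p hp
    simp only [Set.mem_insert_iff, Set.mem_singleton_iff] at hp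
    rcases hp with rfl | rfl | rfl | rfl
    · exact Ideal.subset_span (by left; rfl)
    · exact Ideal.add_mem _
        (Ideal.subset_span (by right; left; rfl))
        (Ideal.mul_mem_right _ _ (Ideal.subset_span (by right; right; right; rfl)))
    · exact Ideal.add_mem _
        (Ideal.subset_span (by right; right; left; rfl))
        (Ideal.mul_mem_right _ _ (Ideal.subset_span (by right; right; right; rfl)))
    · exact Ideal.subset_span (by right; right; right; rfl)
  · rw [Ideal.span_le]
    rintro p hp
    simp only [Set.mem_insert_iff, Set.mem_singleton_iff] at hp
    rcases hp with rfl | rfl | rfl | rfl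
    · exact Ideal.subset_span (by left; rfl)
    · have hm := Ideal.sub_mem _
        (Ideal.subset_span (by right; left; rfl :
          d1 R0 + d3 R0 * X 11 ∈ ({X 6, d1 R0 + d3 R0 * X 11, d2 R0 + d3 R0 * X 12, d3 R0} :
            Set (MvPolynomial (Fin 13) R0))))
        (Ideal.mul_mem_right (X 11) _ (Ideal.subset_span (by right; right; right; rfl :
          d3 R0 ∈ ({X 6, d1 R0 + d3 R0 * X 11, d2 R0 + d3 R0 * X 12, d3 R0} :
            Set (MvPolynomial (Fin 13) R0)))))
      simpa using hm
    · have hm := Ideal.sub_mem _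
        (Ideal.subset_span (by right; right; left; rfl :
          d2 R0 + d3 R0 * X 12 ∈ ({X 6, d1 R0 + d3 R0 * X 11, d2 R0 + d3 R0 * X 12, d3 R0} :
            Set (MvPolynomial (Fin 13) R0))))
        (Ideal.mul_mem_right (X 12) _ (Ideal.subset_span (by right; right; right; rfl :
          d3 R0 ∈ ({X 6, d1 R0 + d3 R0 * X 11, d2 R0 + d3 R0 * X 12, d3 R0} :
            Set (MvPolynomial (Fin 13) R0)))))
      simpa using hm
    · exact Ideal.subset_span (by right; right; right; rfl)

/-- (From the proof of Corollary 7.6.) The automorphism `φ` carries the colon ideal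
`K : I` onto the colon ideal `K' : I`. -/
theorem phi_maps_colon_ideal [IsDomain R0] [IsNoetherianRing R0] :
    Ideal.map (phi R0) (Submodule.colon (Kideal R0) (Iideal R0)) =
      Submodule.colon (K'ideal R0) (Iideal R0) := by
  rw [map_phi_eq, map_colon_eq, ← map_phi_eq, ← map_phi_eq, map_phi_K, map_phi_I]

end
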